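/- Let W be the supremum over starting points S ∈ P of the infimum, over all evacuation protocols started at S, of the evacuation cost. Then a + (1/2)·√((2·a²·(b − c) − (b − 2c)·(b + c)²)/b) ≤ W ≤ a + (b + c)/2. (This bounds the optimal evacuation cost when the adversary chooses both the starting edge and the starting point on it.) -/

import Mathlib

open Set
open scoped ENNReal

noncomputable section

attribute [local instance] Classical.propDecidable

/-- The Euclidean plane. -/
abbrev Plane := EuclideanSpace ℝ (Fin 2)

/-- The perimeter of triangle `ABC`. -/
def perimeter (A B C : Plane) : Set Plane :=
  segment ℝ B C ∪ segment ℝ C A ∪ segment ℝ A B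

/-- `σ, ρ` form an evacuation protocol for triangle `ABC` started at `S`:
both are 1-Lipschitz on `[0,∞)`, start at `S`, and together cover the perimeter. -/
def IsEvacProtocol (A B C S : Plane) (σ ρ : ℝ → Plane) : Prop :=
  LipschitzOnWith 1 σ (Ici 0) ∧ LipschitzOnWith 1 ρ (Ici 0) ∧
    σ 0 = S ∧ ρ 0 = S ∧ perimeter A B C ⊆ σ '' Ici 0 ∪ ρ '' Ici 0

/-- The finding time of exit `T`. -/
def findTime (σ ρ : ℝ → Plane) (T : Plane) : ℝ :=
  sInf {s : ℝ | 0 ≤ s ∧ (σ s = T ∨ ρ s = T)}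

/-- The evacuation time for exit `T`. -/
def evacTime (σ ρ : ℝ → Plane) (T : Plane) : ℝ :=
  if σ (findTime σ ρ T) = T then findTime σ ρ T + dist (ρ (findTime σ ρ T)) T
  else findTime σ ρ T + dist (σ (findTime σ ρ T)) T

/-- The evacuation cost of the protocol `(σ, ρ)`: the supremum in `[0,∞]`
of the evacuation time over all exits on the perimeter. -/
def evacCost (A B C : Plane) (σ ρ : ℝ → Plane) : ℝ≥0∞ :=
  ⨆ T ∈ perimeter A B C, ENNReal.ofReal (evacTime σ ρ T)

namespace EvacAux

/-! ### Unit-speed segment parametrization -/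

/-- Unit-speed parametrization of the segment from `X` to `Y`, clamped. -/
def sg (X Y : Plane) (t : ℝ) : Plane :=
  X + (min (max t 0) (dist X Y) / dist X Y) • (Y - X)

lemma sg_of_nonpos {X Y : Plane} {t : ℝ} (h : t ≤ 0) : sg X Y t = X := by
  unfold sg
  rw [max_eq_right h, min_eq_left dist_nonneg, zero_div, zero_smul, add_zero]

lemma sg_zero (X Y : Plane) : sg X Y 0 = X := sg_of_nonpos le_rfl

lemma sg_of_ge {X Y : Plane} {t : ℝ} (h : dist X Y ≤ t) : sg X Y t = Y := by
  rcases (dist_nonneg : 0 ≤ dist X Y).eq_or_lt with h0 | h0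
  · have hXY : X = Y := dist_eq_zero.1 h0.symm
    subst hXY; unfold sg; rw [sub_self, smul_zero, add_zero]
  · have hmax : max t 0 = t := max_eq_left (h0.le.trans h)
    unfold sg
    rw [hmax, min_eq_right h, div_self h0.ne', one_smul]
    abel

lemma dist_sg (X Y : Plane) (s t : ℝ) :
    dist (sg X Y s) (sg X Y t)
      = |min (max s 0) (dist X Y) - min (max t 0) (dist X Y)| := by
  rcases (dist_nonneg : 0 ≤ dist X Y).eq_or_lt with h0 | h0
  · have hXY : X = Y := dist_eq_zero.1 h0.symm
    subst hXY
    have h1 : ∀ r : ℝ, min (max r 0) (dist X X) = 0 := by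
      intro r; rw [dist_self]; exact min_eq_right (le_max_right r 0)
    have hsg : ∀ r : ℝ, sg X X r = X := by
      intro r; unfold sg; rw [sub_self, smul_zero, add_zero]
    rw [hsg, hsg, dist_self, min_eq_right (le_max_right s 0), min_eq_right (le_max_right t 0),
      sub_self, abs_zero]
  · unfold sg
    rw [dist_eq_norm]
    have hrw : X + (min (max s 0) (dist X Y) / dist X Y) • (Y - X)
        - (X + (min (max t 0) (dist X Y) / dist X Y) • (Y - X))
        = ((min (max s 0) (dist X Y) - min (max t 0) (dist X Y)) / dist X Y) • (Y - X) := by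
      rw [← div_sub_div_same, sub_smul]; abel
    rw [hrw, norm_smul, Real.norm_eq_abs, abs_div, abs_of_pos h0,
      ← dist_eq_norm', div_mul_cancel₀]
    exact h0.ne'

lemma sg_mem (X Y : Plane) (t : ℝ) : sg X Y t ∈ segment ℝ X Y := by
  rw [segment_eq_image']
  refine ⟨min (max t 0) (dist X Y) / dist X Y, ⟨?_, ?_⟩, rfl⟩
  · exact div_nonneg (le_min (le_max_right t 0) dist_nonneg) dist_nonneg
  · rcases (dist_nonneg : 0 ≤ dist X Y).eq_or_lt with h0 | h0
    · rw [← h0, div_zero]; exact zero_le_one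
    · exact (div_le_one h0).2 (min_le_right _ _)

lemma sg_hits {X Y T : Plane} (h : T ∈ segment ℝ X Y) :
    ∃ s, 0 ≤ s ∧ s ≤ dist X Y ∧ sg X Y s = T ∧ sg Y X (dist X Y - s) = T := by
  rw [segment_eq_image'] at h
  obtain ⟨θ, ⟨hθ0, hθ1⟩, rfl⟩ := h
  rcases (dist_nonneg : 0 ≤ dist X Y).eq_or_lt with h0 | h0
  · have hXY : X = Y := dist_eq_zero.1 h0.symm
    subst hXY
    refine ⟨0, le_rfl, by rw [← h0], ?_, ?_⟩ <;> simp [sg]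
  · refine ⟨θ * dist X Y, by positivity, by nlinarith, ?_, ?_⟩
    · unfold sg
      rw [max_eq_left (by positivity), min_eq_left (by nlinarith),
        mul_div_assoc, div_self h0.ne', mul_one]
    · unfold sg
      have h1 : dist Y X = dist X Y := dist_comm Y X
      have h2 : max (dist X Y - θ * dist X Y) 0 = (1 - θ) * dist X Y := by
        rw [max_eq_left (by nlinarith)]; ring
      rw [h1, h2, min_eq_left (by nlinarith), mul_div_assoc, div_self h0.ne', mul_one]
      module

/-! ### Piecewise walk through five points -/

/-- Unit-speed walk `P₀ → P₁ → P₂ → P₃ → P₄`, stopping at `P₄`. -/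
def wk (P₀ P₁ P₂ P₃ P₄ : Plane) (t : ℝ) : Plane :=
  sg P₀ P₁ t + (sg P₁ P₂ (t - dist P₀ P₁) - P₁) +
    (sg P₂ P₃ (t - dist P₀ P₁ - dist P₁ P₂) - P₂) +
    (sg P₃ P₄ (t - dist P₀ P₁ - dist P₁ P₂ - dist P₂ P₃) - P₃)

lemma wk_at0 {P₀ P₁ P₂ P₃ P₄ : Plane} {t : ℝ} (h : t ≤ dist P₀ P₁) :
    wk P₀ P₁ P₂ P₃ P₄ t = sg P₀ P₁ t := by
  have d2 := dist_nonneg (x := P₁) (y := P₂)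
  have d3 := dist_nonneg (x := P₂) (y := P₃)
  unfold wk
  rw [sg_of_nonpos (X := P₁) (Y := P₂) (t := t - dist P₀ P₁) (by linarith),
    sg_of_nonpos (X := P₂) (Y := P₃) (t := t - dist P₀ P₁ - dist P₁ P₂) (by linarith),
    sg_of_nonpos (X := P₃) (Y := P₄) (t := t - dist P₀ P₁ - dist P₁ P₂ - dist P₂ P₃)
      (by linarith)]
  abel

lemma wk_at1 {P₀ P₁ P₂ P₃ P₄ : Plane} {t : ℝ} (h1 : dist P₀ P₁ ≤ t)
    (h2 : t ≤ dist P₀ P₁ + dist P₁ P₂) :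
    wk P₀ P₁ P₂ P₃ P₄ t = sg P₁ P₂ (t - dist P₀ P₁) := by
  have d3 := dist_nonneg (x := P₂) (y := P₃)
  unfold wk
  rw [sg_of_ge (X := P₀) (Y := P₁) (t := t) (by linarith),
    sg_of_nonpos (X := P₂) (Y := P₃) (t := t - dist P₀ P₁ - dist P₁ P₂) (by linarith),
    sg_of_nonpos (X := P₃) (Y := P₄) (t := t - dist P₀ P₁ - dist P₁ P₂ - dist P₂ P₃)
      (by linarith)]
  abel

lemma wk_at2 {P₀ P₁ P₂ P₃ P₄ : Plane} {t : ℝ} (h1 : dist P₀ P₁ + dist P₁ P₂ ≤ t)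
    (h2 : t ≤ dist P₀ P₁ + dist P₁ P₂ + dist P₂ P₃) :
    wk P₀ P₁ P₂ P₃ P₄ t = sg P₂ P₃ (t - dist P₀ P₁ - dist P₁ P₂) := by
  have d1 := dist_nonneg (x := P₀) (y := P₁)
  have d2 := dist_nonneg (x := P₁) (y := P₂)
  unfold wk
  rw [sg_of_ge (X := P₀) (Y := P₁) (t := t) (by linarith),
    sg_of_ge (X := P₁) (Y := P₂) (t := t - dist P₀ P₁) (by linarith),
    sg_of_nonpos (X := P₃) (Y := P₄) (t := t - dist P₀ P₁ - dist P₁ P₂ - dist P₂ P₃)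
      (by linarith)]
  abel

lemma wk_at3 {P₀ P₁ P₂ P₃ P₄ : Plane} {t : ℝ}
    (h1 : dist P₀ P₁ + dist P₁ P₂ + dist P₂ P₃ ≤ t) :
    wk P₀ P₁ P₂ P₃ P₄ t = sg P₃ P₄ (t - dist P₀ P₁ - dist P₁ P₂ - dist P₂ P₃) := by
  have d1 := dist_nonneg (x := P₀) (y := P₁)
  have d2 := dist_nonneg (x := P₁) (y := P₂)
  have d3 := dist_nonneg (x := P₂) (y := P₃)
  unfold wk
  rw [sg_of_ge (X := P₀) (Y := P₁) (t := t) (by linarith),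
    sg_of_ge (X := P₁) (Y := P₂) (t := t - dist P₀ P₁) (by linarith),
    sg_of_ge (X := P₂) (Y := P₃) (t := t - dist P₀ P₁ - dist P₁ P₂) (by linarith)]
  abel

lemma wk_zero (P₀ P₁ P₂ P₃ P₄ : Plane) : wk P₀ P₁ P₂ P₃ P₄ 0 = P₀ := by
  rw [wk_at0 dist_nonneg, sg_zero]

lemma wk_mem (P₀ P₁ P₂ P₃ P₄ : Plane) (t : ℝ) :
    wk P₀ P₁ P₂ P₃ P₄ t ∈ segment ℝ P₀ P₁ ∪ segment ℝ P₁ P₂ ∪ segment ℝ P₂ P₃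
      ∪ segment ℝ P₃ P₄ := by
  rcases le_total t (dist P₀ P₁) with h | h
  · exact Or.inl (Or.inl (Or.inl (wk_at0 h ▸ sg_mem _ _ _)))
  rcases le_total t (dist P₀ P₁ + dist P₁ P₂) with h2 | h2
  · exact Or.inl (Or.inl (Or.inr (wk_at1 h h2 ▸ sg_mem _ _ _)))
  rcases le_total t (dist P₀ P₁ + dist P₁ P₂ + dist P₂ P₃) with h3 | h3
  · exact Or.inl (Or.inr (wk_at2 h2 h3 ▸ sg_mem _ _ _))
  · exact Or.inr (wk_at3 h3 ▸ sg_mem _ _ _)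

lemma clamp_mono {o d s t : ℝ} (h : s ≤ t) :
    min (max (s - o) 0) d ≤ min (max (t - o) 0) d :=
  min_le_min (max_le_max (by linarith) le_rfl) le_rfl

lemma clamp_sum (d1 d2 d3 d4 x : ℝ) (h1 : 0 ≤ d1) (h2 : 0 ≤ d2) (h3 : 0 ≤ d3) (h4 : 0 ≤ d4) :
    min (max x 0) d1 + min (max (x - d1) 0) d2 + min (max (x - d1 - d2) 0) d3
      + min (max (x - d1 - d2 - d3) 0) d4 = min (max x 0) (d1 + d2 + d3 + d4) := by
  simp only [min_def, max_def]
  split_ifs <;> linarith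

lemma wk_lip (P₀ P₁ P₂ P₃ P₄ : Plane) : LipschitzWith 1 (wk P₀ P₁ P₂ P₃ P₄) := by
  apply LipschitzWith.of_dist_le_mul
  have key : ∀ s t : ℝ, s ≤ t → dist (wk P₀ P₁ P₂ P₃ P₄ s) (wk P₀ P₁ P₂ P₃ P₄ t) ≤ t - s := by
    intro s t hst
    have d1 := dist_nonneg (x := P₀) (y := P₁)
    have d2 := dist_nonneg (x := P₁) (y := P₂)
    have d3 := dist_nonneg (x := P₂) (y := P₃)
    have d4 := dist_nonneg (x := P₃) (y := P₄)
    unfold wk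
    rw [dist_eq_norm]
    have hdiff : (sg P₀ P₁ s + (sg P₁ P₂ (s - dist P₀ P₁) - P₁) +
          (sg P₂ P₃ (s - dist P₀ P₁ - dist P₁ P₂) - P₂) +
          (sg P₃ P₄ (s - dist P₀ P₁ - dist P₁ P₂ - dist P₂ P₃) - P₃))
        - (sg P₀ P₁ t + (sg P₁ P₂ (t - dist P₀ P₁) - P₁) +
          (sg P₂ P₃ (t - dist P₀ P₁ - dist P₁ P₂) - P₂) +
          (sg P₃ P₄ (t - dist P₀ P₁ - dist P₁ P₂ - dist P₂ P₃) - P₃))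
        = (sg P₀ P₁ s - sg P₀ P₁ t) + (sg P₁ P₂ (s - dist P₀ P₁) - sg P₁ P₂ (t - dist P₀ P₁))
          + (sg P₂ P₃ (s - dist P₀ P₁ - dist P₁ P₂) - sg P₂ P₃ (t - dist P₀ P₁ - dist P₁ P₂))
          + (sg P₃ P₄ (s - dist P₀ P₁ - dist P₁ P₂ - dist P₂ P₃)
              - sg P₃ P₄ (t - dist P₀ P₁ - dist P₁ P₂ - dist P₂ P₃)) := by
      abel
    rw [hdiff]
    have n4 : ∀ x y z w : Plane, ‖x + y + z + w‖ ≤ ‖x‖ + ‖y‖ + ‖z‖ + ‖w‖ := by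
      intro x y z w
      calc ‖x + y + z + w‖ ≤ ‖x + y + z‖ + ‖w‖ := norm_add_le _ _
        _ ≤ (‖x + y‖ + ‖z‖) + ‖w‖ := add_le_add_left (norm_add_le _ _) _
        _ ≤ ‖x‖ + ‖y‖ + ‖z‖ + ‖w‖ := by
            have := norm_add_le x y; linarith
    refine le_trans (n4 _ _ _ _) ?_
    rw [← dist_eq_norm, ← dist_eq_norm, ← dist_eq_norm, ← dist_eq_norm]
    rw [dist_sg, dist_sg, dist_sg, dist_sg]
    have m1 : min (max s 0) (dist P₀ P₁) ≤ min (max t 0) (dist P₀ P₁) :=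
      min_le_min (max_le_max hst le_rfl) le_rfl
    have m2 : min (max (s - dist P₀ P₁) 0) (dist P₁ P₂)
        ≤ min (max (t - dist P₀ P₁) 0) (dist P₁ P₂) :=
      min_le_min (max_le_max (by linarith) le_rfl) le_rfl
    have m3 : min (max (s - dist P₀ P₁ - dist P₁ P₂) 0) (dist P₂ P₃)
        ≤ min (max (t - dist P₀ P₁ - dist P₁ P₂) 0) (dist P₂ P₃) :=
      min_le_min (max_le_max (by linarith) le_rfl) le_rfl
    have m4 : min (max (s - dist P₀ P₁ - dist P₁ P₂ - dist P₂ P₃) 0) (dist P₃ P₄)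
        ≤ min (max (t - dist P₀ P₁ - dist P₁ P₂ - dist P₂ P₃) 0) (dist P₃ P₄) :=
      min_le_min (max_le_max (by linarith) le_rfl) le_rfl
    have Hs := clamp_sum (dist P₀ P₁) (dist P₁ P₂) (dist P₂ P₃) (dist P₃ P₄) s d1 d2 d3 d4
    have Ht := clamp_sum (dist P₀ P₁) (dist P₁ P₂) (dist P₂ P₃) (dist P₃ P₄) t d1 d2 d3 d4
    have hfin : min (max t 0) (dist P₀ P₁ + dist P₁ P₂ + dist P₂ P₃ + dist P₃ P₄)
        - min (max s 0) (dist P₀ P₁ + dist P₁ P₂ + dist P₂ P₃ + dist P₃ P₄) ≤ t - s := by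
      simp only [min_def, max_def]
      split_ifs <;> linarith
    rw [abs_of_nonpos (sub_nonpos.2 m1), abs_of_nonpos (sub_nonpos.2 m2),
      abs_of_nonpos (sub_nonpos.2 m3), abs_of_nonpos (sub_nonpos.2 m4),
      neg_sub, neg_sub, neg_sub, neg_sub]
    linarith
  intro s t
  rcases le_total s t with h | h
  · have := key s t h
    rw [NNReal.coe_one, one_mul, Real.dist_eq, abs_of_nonpos (by linarith)]
    linarith
  · have := key t s h
    rw [dist_comm (wk P₀ P₁ P₂ P₃ P₄ s), NNReal.coe_one, one_mul, Real.dist_eq,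
      abs_of_nonneg (by linarith)] at *
    linarith

/-! ### Splitting a segment at an interior point -/

lemma seg_split {X Y S T : Plane} (hS : S ∈ segment ℝ X Y) (hT : T ∈ segment ℝ X Y) :
    T ∈ segment ℝ X S ∨ T ∈ segment ℝ S Y := by
  rw [segment_eq_image'] at hS hT
  obtain ⟨φ, ⟨hφ0, hφ1⟩, rfl⟩ := hS
  obtain ⟨θ, ⟨hθ0, hθ1⟩, rfl⟩ := hT
  rcases le_total θ φ with h | h
  · left
    rw [segment_eq_image']
    rcases hφ0.eq_or_lt with h0 | h0
    · have hθ : θ = 0 := le_antisymm (h.trans h0.symm.le) hθ0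
      exact ⟨0, ⟨le_rfl, zero_le_one⟩, by rw [hθ]; module⟩
    · refine ⟨θ / φ, ⟨by positivity, (div_le_one h0).2 h⟩, ?_⟩
      have hφ : φ ≠ 0 := h0.ne'
      match_scalars <;> field_simp <;> ring
  · right
    rw [segment_eq_image']
    rcases hφ1.eq_or_lt with h1 | h1
    · have hθ : θ = 1 := le_antisymm hθ1 (by rw [← h1]; exact h)
      exact ⟨1, ⟨zero_le_one, le_rfl⟩, by rw [hθ, h1]; module⟩
    · refine ⟨(θ - φ) / (1 - φ), ⟨div_nonneg (by linarith) (by linarith), (div_le_one (by linarith)).2 (by linarith)⟩, ?_⟩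
      have hφ : (1:ℝ) - φ ≠ 0 := by linarith
      match_scalars <;> field_simp <;> ring

/-! ### The protocol walking the perimeter in two directions -/

lemma protocol_main (X Y Z S : Plane) (hS : S ∈ segment ℝ X Y) :
    ∃ σ ρ : ℝ → Plane, LipschitzWith 1 σ ∧ LipschitzWith 1 ρ ∧ σ 0 = S ∧ ρ 0 = S ∧
      (∀ t, σ t ∈ segment ℝ X Y ∪ segment ℝ Y Z ∪ segment ℝ Z X) ∧
      (∀ t, ρ t ∈ segment ℝ X Y ∪ segment ℝ Y Z ∪ segment ℝ Z X) ∧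
      (∀ T ∈ segment ℝ X Y ∪ segment ℝ Y Z ∪ segment ℝ Z X,
        ∃ u v, 0 ≤ u ∧ 0 ≤ v ∧ u + v ≤ dist X Y + dist Y Z + dist Z X ∧
          wk S Y Z X S u = T ∧ wk S X Z Y S v = T) ∧
      σ = wk S Y Z X S ∧ ρ = wk S X Z Y S := by
  have hSY : segment ℝ S Y ⊆ segment ℝ X Y :=
    (convex_segment X Y).segment_subset hS (right_mem_segment ℝ X Y)
  have hXS : segment ℝ X S ⊆ segment ℝ X Y :=
    (convex_segment X Y).segment_subset (left_mem_segment ℝ X Y) hS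
  have hSX : segment ℝ S X ⊆ segment ℝ X Y := by rw [segment_symm]; exact hXS
  have hYS : segment ℝ Y S ⊆ segment ℝ X Y := by rw [segment_symm]; exact hSY
  have hsum : dist X S + dist S Y = dist X Y := by
    have hw : Wbtw ℝ X S Y := mem_segment_iff_wbtw.1 hS
    exact hw.dist_add_dist
  refine ⟨wk S Y Z X S, wk S X Z Y S, wk_lip _ _ _ _ _, wk_lip _ _ _ _ _,
    wk_zero _ _ _ _ _, wk_zero _ _ _ _ _, ?_, ?_, ?_, rfl, rfl⟩
  · intro t
    rcases wk_mem S Y Z X S t with (((h | h) | h) | h)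
    · exact Or.inl (Or.inl (hSY h))
    · exact Or.inl (Or.inr h)
    · exact Or.inr h
    · exact Or.inl (Or.inl (hXS (segment_symm ℝ X S ▸ h)))
  · intro t
    rcases wk_mem S X Z Y S t with (((h | h) | h) | h)
    · exact Or.inl (Or.inl (hSX h))
    · exact Or.inr (segment_symm ℝ Z X ▸ h)
    · exact Or.inl (Or.inr (segment_symm ℝ Y Z ▸ h))
    · exact Or.inl (Or.inl (hYS h))
  intro T hT
  have dc1 : dist S X = dist X S := dist_comm S X
  have dc2 : dist Z Y = dist Y Z := dist_comm Z Y
  have dc3 : dist X Z = dist Z X := dist_comm X Z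
  rcases hT with (hT | hT) | hT
  · -- T on the edge XY: split at S
    rcases seg_split hS hT with h | h
    · -- T between X and S : found first by ρ
      rw [segment_symm] at h
      obtain ⟨s, hs0, hsle, hfwd, hbwd⟩ := sg_hits h
      refine ⟨dist S Y + dist Y Z + dist Z X + (dist S X - s), s,
        by linarith [dist_nonneg (x := S) (y := Y), dist_nonneg (x := Y) (y := Z),
          dist_nonneg (x := Z) (y := X)], hs0, by linarith, ?_, ?_⟩
      · rw [wk_at3 (by linarith)]
        have : dist S Y + dist Y Z + dist Z X + (dist S X - s)
            - dist S Y - dist Y Z - dist Z X = dist S X - s := by ring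
        rw [this]
        exact hbwd
      · rw [wk_at0 (by linarith)]; exact hfwd
    · -- T between S and Y : found first by σ
      obtain ⟨s, hs0, hsle, hfwd, hbwd⟩ := sg_hits h
      refine ⟨s, dist S X + dist X Z + dist Z Y + (dist S Y - s), hs0,
        by linarith [dist_nonneg (x := S) (y := X), dist_nonneg (x := X) (y := Z),
          dist_nonneg (x := Z) (y := Y)], by linarith, ?_, ?_⟩
      · rw [wk_at0 (by linarith)]; exact hfwd
      · rw [wk_at3 (by linarith)]
        have : dist S X + dist X Z + dist Z Y + (dist S Y - s)
            - dist S X - dist X Z - dist Z Y = dist S Y - s := by ring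
        rw [this]
        exact hbwd
  · -- T on the edge YZ
    obtain ⟨s, hs0, hsle, hfwd, hbwd⟩ := sg_hits hT
    refine ⟨dist S Y + s, dist S X + dist X Z + (dist Y Z - s), by
        linarith [dist_nonneg (x := S) (y := Y)],
      by linarith [dist_nonneg (x := S) (y := X), dist_nonneg (x := X) (y := Z)],
      by linarith, ?_, ?_⟩
    · rw [wk_at1 (by linarith) (by linarith)]
      have : dist S Y + s - dist S Y = s := by ring
      rw [this]; exact hfwd
    · rw [wk_at2 (by linarith) (by rw [dc2]; linarith)]
      have : dist S X + dist X Z + (dist Y Z - s) - dist S X - dist X Z = dist Y Z - s := by ring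
      rw [this]; exact hbwd
  · -- T on the edge ZX
    obtain ⟨s, hs0, hsle, hfwd, hbwd⟩ := sg_hits hT
    refine ⟨dist S Y + dist Y Z + s, dist S X + (dist Z X - s), by
        linarith [dist_nonneg (x := S) (y := Y), dist_nonneg (x := Y) (y := Z)],
      by linarith [dist_nonneg (x := S) (y := X)], by linarith, ?_, ?_⟩
    · rw [wk_at2 (by linarith) (by linarith)]
      have : dist S Y + dist Y Z + s - dist S Y - dist Y Z = s := by ring
      rw [this]; exact hfwd
    · rw [wk_at1 (by linarith) (by rw [dc3]; linarith)]
      have : dist S X + (dist Z X - s) - dist S X = dist Z X - s := by ring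
      rw [this]; exact hbwd

/-! ### Properties of the finding time -/

lemma findTime_spec {σ ρ : ℝ → Plane} (hσ : ContinuousOn σ (Ici 0)) (hρ : ContinuousOn ρ (Ici 0))
    {T : Plane} {u : ℝ} (hu : 0 ≤ u) (huT : σ u = T ∨ ρ u = T) :
    0 ≤ findTime σ ρ T ∧ (σ (findTime σ ρ T) = T ∨ ρ (findTime σ ρ T) = T) ∧
      ∀ s, 0 ≤ s → (σ s = T ∨ ρ s = T) → findTime σ ρ T ≤ s := by
  have hA : {s : ℝ | 0 ≤ s ∧ (σ s = T ∨ ρ s = T)}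
      = (Ici 0 ∩ σ ⁻¹' {T}) ∪ (Ici 0 ∩ ρ ⁻¹' {T}) := by
    ext x; simp only [mem_setOf_eq, mem_union, mem_inter_iff, mem_Ici, mem_preimage,
      mem_singleton_iff]
    tauto
  have hclosed : IsClosed {s : ℝ | 0 ≤ s ∧ (σ s = T ∨ ρ s = T)} := by
    rw [hA]
    exact (hσ.preimage_isClosed_of_isClosed isClosed_Ici isClosed_singleton).union
      (hρ.preimage_isClosed_of_isClosed isClosed_Ici isClosed_singleton)
  have hne : {s : ℝ | 0 ≤ s ∧ (σ s = T ∨ ρ s = T)}.Nonempty := ⟨u, hu, huT⟩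
  have hbdd : BddBelow {s : ℝ | 0 ≤ s ∧ (σ s = T ∨ ρ s = T)} := ⟨0, fun x hx => hx.1⟩
  have hmem := hclosed.csInf_mem hne hbdd
  exact ⟨hmem.1, hmem.2, fun s h0 hs => csInf_le hbdd ⟨h0, hs⟩⟩

lemma robot_dist {σ : ℝ → Plane} (hσ : LipschitzOnWith 1 σ (Ici 0)) {s t : ℝ}
    (hs : 0 ≤ s) (ht : 0 ≤ t) : dist (σ s) (σ t) ≤ |s - t| := by
  have := hσ.dist_le_mul s hs t ht
  simpa [Real.dist_eq] using this

/-- Key lower-bound lemma: if `T₁` is found no later than `T₂`, then the evacuation time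
for `T₂` is at least `findTime T₁ + dist T₁ T₂`. -/
lemma evacTime_pair {σ ρ : ℝ → Plane} (hσ : LipschitzOnWith 1 σ (Ici 0))
    (hρ : LipschitzOnWith 1 ρ (Ici 0)) {T₁ T₂ : Plane}
    {u₁ : ℝ} (hu₁ : 0 ≤ u₁) (hw₁ : σ u₁ = T₁ ∨ ρ u₁ = T₁)
    {u₂ : ℝ} (hu₂ : 0 ≤ u₂) (hw₂ : σ u₂ = T₂ ∨ ρ u₂ = T₂)
    (h12 : findTime σ ρ T₁ ≤ findTime σ ρ T₂) :
    findTime σ ρ T₁ + dist T₁ T₂ ≤ evacTime σ ρ T₂ := by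
  obtain ⟨ht₁0, ht₁, -⟩ := findTime_spec hσ.continuousOn hρ.continuousOn hu₁ hw₁
  obtain ⟨ht₂0, ht₂, -⟩ := findTime_spec hσ.continuousOn hρ.continuousOn hu₂ hw₂
  set t₁ := findTime σ ρ T₁ with hT1
  set t₂ := findTime σ ρ T₂ with hT2
  unfold evacTime
  rw [← hT2]
  by_cases h : σ t₂ = T₂
  · rw [if_pos h]
    rcases ht₁ with h1 | h1
    · -- σ found both
      have hd := robot_dist hσ ht₁0 ht₂0
      rw [h1, h, abs_of_nonpos (by linarith), neg_sub] at hd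
      linarith [dist_nonneg (x := ρ t₂) (y := T₂)]
    · -- ρ found T₁
      have hd := robot_dist hρ ht₁0 ht₂0
      rw [h1, abs_of_nonpos (by linarith), neg_sub] at hd
      have htri := dist_triangle T₁ (ρ t₂) T₂
      have : dist T₁ (ρ t₂) ≤ t₂ - t₁ := by rw [dist_comm]; linarith [dist_comm (ρ t₂) T₁]
      linarith
  · rw [if_neg h]
    have h1 : ρ t₂ = T₂ := ht₂.resolve_left h
    rcases ht₁ with h2 | h2
    · have hd := robot_dist hσ ht₁0 ht₂0
      rw [h2, abs_of_nonpos (by linarith), neg_sub] at hd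
      have htri := dist_triangle T₁ (σ t₂) T₂
      have : dist T₁ (σ t₂) ≤ t₂ - t₁ := by rw [dist_comm]; linarith [dist_comm (σ t₂) T₁]
      linarith
    · have hd := robot_dist hρ ht₁0 ht₂0
      rw [h2, h1, abs_of_nonpos (by linarith), neg_sub] at hd
      linarith [dist_nonneg (x := σ t₂) (y := T₂)]

/-! ### Polynomial inequalities -/

lemma ineq_one {a b c : ℝ} (hc : 0 < c) (hbc : c ≤ b) (hab : b ≤ a)
    (hno : a^2 ≤ b^2 + c^2) (h1 : a^2*b ≤ c*(a^2+b^2-c^2)) :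
    2*a^2*(b-c) - (b-2*c)*(b+c)^2 ≤ 4*b*c^2 := by
  nlinarith [sq_nonneg (a-b), sq_nonneg (b-c), sq_nonneg (a-c), sq_nonneg (a+b-2*c),
    mul_pos hc (lt_of_lt_of_le hc hbc), sq_nonneg (b+c), sq_nonneg (a*b - c*c)]

lemma ineq_two {a b c : ℝ} (hc : 0 < c) (hbc : c ≤ b) (hab : b ≤ a)
    (hno : a^2 ≤ b^2 + c^2) (h2 : c*(a^2+b^2-c^2) ≤ a^2*b) :
    (2*a^2*(b-c) - (b-2*c)*(b+c)^2) * (a^2+b^2-c^2)^2 ≤ 4*a^4*b^3 := by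
  rcases eq_or_lt_of_le hbc with h | h
  · subst h; nlinarith [sq_nonneg a, sq_nonneg c]
  · have hu0 : (0:ℝ) < b - c := by linarith
    have hw0 : (0:ℝ) ≤ a^2 - b*c - c^2 := by
      have h2' : c*(b+c)*(b-c) ≤ a^2*(b-c) := by nlinarith
      nlinarith [(mul_le_mul_iff_of_pos_right hu0).mpr (le_refl (a^2))]
    have hs0 : (0:ℝ) ≤ c*(b-c) + (b-c)^2 - (a^2 - b*c - c^2) := by nlinarith
    have hA : (0:ℝ) ≤ 4*(b-c)*c^5 + 16*(b-c)^2*c^4 + 25*(b-c)^3*c^3 + 19*(b-c)^4*c^2 + 6*(b-c)^5*c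
          + (a^2-b*c-c^2)*(8*c^4 + 20*(b-c)*c^3 + 15*(b-c)^2*c^2 + 2*(b-c)^3*c)
          + (c*(b-c) + (b-c)^2 - (a^2-b*c-c^2))*(2*(a^2-b*c-c^2)^2
              + (a^2-b*c-c^2)*((b-c)*c + (b-c)^2) + (b-c)^4) := by
      have m1 : (0:ℝ) ≤ (b-c)*c^5 := mul_nonneg hu0.le (by positivity)
      have m2 : (0:ℝ) ≤ (b-c)^2*c^4 := by positivity
      have m3 : (0:ℝ) ≤ (b-c)^3*c^3 := mul_nonneg (pow_nonneg hu0.le 3) (by positivity)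
      have m4 : (0:ℝ) ≤ (b-c)^4*c^2 := by positivity
      have m5 : (0:ℝ) ≤ (b-c)^5*c := mul_nonneg (pow_nonneg hu0.le 5) hc.le
      have m6 : (0:ℝ) ≤ (a^2-b*c-c^2)*(8*c^4 + 20*(b-c)*c^3 + 15*(b-c)^2*c^2 + 2*(b-c)^3*c) := by
        apply mul_nonneg hw0
        have : (0:ℝ) ≤ 20*(b-c)*c^3 := by nlinarith [mul_nonneg hu0.le (pow_nonneg hc.le 3)]
        have : (0:ℝ) ≤ 2*(b-c)^3*c := by nlinarith [mul_nonneg (pow_nonneg hu0.le 3) hc.le]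
        positivity
      have m7 : (0:ℝ) ≤ (c*(b-c) + (b-c)^2 - (a^2-b*c-c^2))*(2*(a^2-b*c-c^2)^2
          + (a^2-b*c-c^2)*((b-c)*c + (b-c)^2) + (b-c)^4) := by
        apply mul_nonneg hs0
        have : (0:ℝ) ≤ (a^2-b*c-c^2)*((b-c)*c + (b-c)^2) :=
          mul_nonneg hw0 (by nlinarith [mul_nonneg hu0.le hc.le, sq_nonneg (b-c)])
        nlinarith [sq_nonneg (a^2-b*c-c^2), pow_nonneg hu0.le 4]
      linarith
    have key : 4*a^4*b^3 - (2*a^2*(b-c) - (b-2*c)*(b+c)^2) * (a^2+b^2-c^2)^2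
        = (b-c) * (4*(b-c)*c^5 + 16*(b-c)^2*c^4 + 25*(b-c)^3*c^3 + 19*(b-c)^4*c^2 + 6*(b-c)^5*c
          + (a^2-b*c-c^2)*(8*c^4 + 20*(b-c)*c^3 + 15*(b-c)^2*c^2 + 2*(b-c)^3*c)
          + (c*(b-c) + (b-c)^2 - (a^2-b*c-c^2))*(2*(a^2-b*c-c^2)^2
              + (a^2-b*c-c^2)*((b-c)*c + (b-c)^2) + (b-c)^4)) := by
      ring
    nlinarith [mul_nonneg hu0.le hA, key]

end EvacAux

open EvacAux in
/-- Bounds on the optimal evacuation cost when the adversary chooses both the starting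
edge and the starting point: `W` is the supremum over starting points `S` on the
perimeter of the best evacuation cost achievable from `S`. -/
theorem stmt3 (A B C : Plane) (hind : AffineIndependent ℝ ![A, B, C])
    (a b c : ℝ) (ha : a = dist B C) (hb : b = dist C A) (hc : c = dist A B)
    (hab : b ≤ a) (hbc : c ≤ b) (hnonobtuse : a ^ 2 ≤ b ^ 2 + c ^ 2)
    (W : ℝ≥0∞)
    (hW : W = ⨆ (S : Plane) (_ : S ∈ perimeter A B C),
        ⨅ (σ : ℝ → Plane) (ρ : ℝ → Plane) (_ : IsEvacProtocol A B C S σ ρ),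
          evacCost A B C σ ρ) :
    ENNReal.ofReal
        (a + (1/2) * Real.sqrt ((2 * a ^ 2 * (b - c) - (b - 2 * c) * (b + c) ^ 2) / b)) ≤ W ∧
      W ≤ ENNReal.ofReal (a + (b + c) / 2) := by
  have hCA : C ≠ A := by
    intro h
    exact (by decide : (2 : Fin 3) ≠ 0) (hind.injective (show ![A,B,C] 2 = ![A,B,C] 0 by simpa using h))
  have hAB : A ≠ B := by
    intro h
    exact (by decide : (0 : Fin 3) ≠ 1) (hind.injective (show ![A,B,C] 0 = ![A,B,C] 1 by simpa using h))
  have hbpos : 0 < b := by rw [hb]; exact dist_pos.2 hCA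
  have hcpos : 0 < c := by rw [hc]; exact dist_pos.2 hAB
  have hapos : 0 < a := lt_of_lt_of_le (lt_of_lt_of_le hcpos hbc) hab
  -- diameter bound
  have hsub : perimeter A B C ⊆ convexHull ℝ ({A, B, C} : Set Plane) := by
    have h1 : segment ℝ B C ⊆ convexHull ℝ ({A, B, C} : Set Plane) := by
      rw [← convexHull_pair]
      apply convexHull_mono
      intro x hx
      simp only [mem_insert_iff, mem_singleton_iff] at hx ⊢
      tauto
    have h2 : segment ℝ C A ⊆ convexHull ℝ ({A, B, C} : Set Plane) := by
      rw [← convexHull_pair]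
      apply convexHull_mono
      intro x hx
      simp only [mem_insert_iff, mem_singleton_iff] at hx ⊢
      tauto
    have h3 : segment ℝ A B ⊆ convexHull ℝ ({A, B, C} : Set Plane) := by
      rw [← convexHull_pair]
      apply convexHull_mono
      intro x hx
      simp only [mem_insert_iff, mem_singleton_iff] at hx ⊢
      tauto
    exact union_subset (union_subset h1 h2) h3
  have hdiam : ∀ p q, p ∈ perimeter A B C → q ∈ perimeter A B C → dist p q ≤ a := by
    intro p q hp hq
    have hbd : Bornology.IsBounded (convexHull ℝ ({A, B, C} : Set Plane)) :=
      isBounded_convexHull.2 (Set.toFinite _).isBounded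
    refine (Metric.dist_le_diam_of_mem hbd (hsub hp) (hsub hq)).trans ?_
    rw [convexHull_diam]
    apply Metric.diam_le_of_forall_dist_le hapos.le
    intro x hx y hy
    simp only [mem_insert_iff, mem_singleton_iff] at hx hy
    rcases hx with rfl | rfl | rfl <;> rcases hy with rfl | rfl | rfl <;>
      first
        | (rw [dist_self]; exact hapos.le)
        | (rw [← ha])
        | (rw [← hc]; linarith)
        | (rw [← hb]; linarith)
        | (rw [dist_comm, ← ha])
        | (rw [dist_comm, ← hb]; linarith)
        | (rw [dist_comm, ← hc]; linarith)
  -- generic lower bound given a good starting point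
  have hlow : ∀ S : Plane, S ∈ perimeter A B C →
      (1/2) * Real.sqrt ((2 * a ^ 2 * (b - c) - (b - 2 * c) * (b + c) ^ 2) / b) ≤ dist S B →
      (1/2) * Real.sqrt ((2 * a ^ 2 * (b - c) - (b - 2 * c) * (b + c) ^ 2) / b) ≤ dist S C →
      ENNReal.ofReal
          (a + (1/2) * Real.sqrt ((2 * a ^ 2 * (b - c) - (b - 2 * c) * (b + c) ^ 2) / b)) ≤ W := by
    intro S hSmem hSB hSC
    rw [hW]
    refine le_trans ?_
      (le_iSup₂ (f := fun S (_ : S ∈ perimeter A B C) =>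
        ⨅ (σ : ℝ → Plane) (ρ : ℝ → Plane) (_ : IsEvacProtocol A B C S σ ρ),
          evacCost A B C σ ρ) S hSmem)
    refine le_iInf fun σ => le_iInf fun ρ => le_iInf fun hp => ?_
    obtain ⟨hσl, hρl, hσ0, hρ0, hcov⟩ := hp
    have hBperim : B ∈ perimeter A B C := Or.inl (Or.inl (left_mem_segment ℝ B C))
    have hCperim : C ∈ perimeter A B C := Or.inl (Or.inl (right_mem_segment ℝ B C))
    have wB : ∃ u, 0 ≤ u ∧ (σ u = B ∨ ρ u = B) := by
      rcases hcov hBperim with ⟨u, hu, hσu⟩ | ⟨u, hu, hρu⟩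
      · exact ⟨u, hu, Or.inl hσu⟩
      · exact ⟨u, hu, Or.inr hρu⟩
    have wC : ∃ u, 0 ≤ u ∧ (σ u = C ∨ ρ u = C) := by
      rcases hcov hCperim with ⟨u, hu, hσu⟩ | ⟨u, hu, hρu⟩
      · exact ⟨u, hu, Or.inl hσu⟩
      · exact ⟨u, hu, Or.inr hρu⟩
    obtain ⟨uB, huB0, huB⟩ := wB
    obtain ⟨uC, huC0, huC⟩ := wC
    obtain ⟨htB0, htBmem, -⟩ :=
      EvacAux.findTime_spec hσl.continuousOn hρl.continuousOn huB0 huB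
    obtain ⟨htC0, htCmem, -⟩ :=
      EvacAux.findTime_spec hσl.continuousOn hρl.continuousOn huC0 huC
    have hfB : dist S B ≤ findTime σ ρ B := by
      rcases htBmem with h | h
      · calc dist S B = dist (σ 0) (σ (findTime σ ρ B)) := by rw [hσ0, h]
          _ ≤ |0 - findTime σ ρ B| := EvacAux.robot_dist hσl le_rfl htB0
          _ = findTime σ ρ B := by rw [zero_sub, abs_neg, abs_of_nonneg htB0]
      · calc dist S B = dist (ρ 0) (ρ (findTime σ ρ B)) := by rw [hρ0, h]
          _ ≤ |0 - findTime σ ρ B| := EvacAux.robot_dist hρl le_rfl htB0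
          _ = findTime σ ρ B := by rw [zero_sub, abs_neg, abs_of_nonneg htB0]
    have hfC : dist S C ≤ findTime σ ρ C := by
      rcases htCmem with h | h
      · calc dist S C = dist (σ 0) (σ (findTime σ ρ C)) := by rw [hσ0, h]
          _ ≤ |0 - findTime σ ρ C| := EvacAux.robot_dist hσl le_rfl htC0
          _ = findTime σ ρ C := by rw [zero_sub, abs_neg, abs_of_nonneg htC0]
      · calc dist S C = dist (ρ 0) (ρ (findTime σ ρ C)) := by rw [hρ0, h]
          _ ≤ |0 - findTime σ ρ C| := EvacAux.robot_dist hρl le_rfl htC0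
          _ = findTime σ ρ C := by rw [zero_sub, abs_neg, abs_of_nonneg htC0]
    have hdBC : dist B C = a := ha.symm
    unfold evacCost
    rcases le_total (findTime σ ρ B) (findTime σ ρ C) with hle | hle
    · have hkey := EvacAux.evacTime_pair hσl hρl huB0 huB huC0 huC hle
      refine le_trans ?_ (le_iSup₂ (f := fun T (_ : T ∈ perimeter A B C) =>
        ENNReal.ofReal (evacTime σ ρ T)) C hCperim)
      apply ENNReal.ofReal_le_ofReal
      linarith
    · have hkey := EvacAux.evacTime_pair hσl hρl huC0 huC huB0 huB hle
      have hdCB : dist C B = a := by rw [dist_comm]; exact ha.symm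
      refine le_trans ?_ (le_iSup₂ (f := fun T (_ : T ∈ perimeter A B C) =>
        ENNReal.ofReal (evacTime σ ρ T)) B hBperim)
      apply ENNReal.ofReal_le_ofReal
      linarith
  constructor
  · -- lower bound
    rcases le_total (a^2*b) (c*(a^2+b^2-c^2)) with hreg | hreg
    · -- start at vertex A
      have hsq : (2 * a ^ 2 * (b - c) - (b - 2 * c) * (b + c) ^ 2) / b ≤ (2*c)^2 := by
        rw [div_le_iff₀ hbpos]
        nlinarith [EvacAux.ineq_one hcpos hbc hab hnonobtuse hreg]
      have hsqrt : Real.sqrt ((2 * a ^ 2 * (b - c) - (b - 2 * c) * (b + c) ^ 2) / b) ≤ 2*c := by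
        refine (Real.sqrt_le_sqrt hsq).trans ?_
        rw [Real.sqrt_sq (by positivity)]
      apply hlow A (Or.inr (left_mem_segment ℝ A B))
      · rw [← hc]; linarith
      · rw [dist_comm, ← hb]; linarith
    · -- start at the equalizing point on side CA
      have hq0 : (0:ℝ) < a^2 + b^2 - c^2 := by nlinarith
      set τ := a^2 / (a^2 + b^2 - c^2) with hτdef
      have hτ0 : 0 ≤ τ := by positivity
      have hτ1 : τ ≤ 1 := by rw [hτdef, div_le_one hq0]; nlinarith
      have hτq : τ * (a^2 + b^2 - c^2) = a^2 := by
        rw [hτdef]; field_simp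
      set S := C + τ • (A - C) with hSdef
      have hSseg : S ∈ segment ℝ C A := by
        rw [segment_eq_image']
        exact ⟨τ, ⟨hτ0, hτ1⟩, rfl⟩
      have hnAC : ‖A - C‖ = b := by
        rw [← dist_eq_norm, dist_comm]; exact hb.symm
      have hnCB : ‖C - B‖ = a := by
        rw [← dist_eq_norm, dist_comm]; exact ha.symm
      have hSC : dist S C = τ * b := by
        rw [dist_eq_norm]
        have e : S - C = τ • (A - C) := by rw [hSdef]; abel
        rw [e, norm_smul, Real.norm_eq_abs, abs_of_nonneg hτ0, hnAC]
      have hinner : inner ℝ (C - B) (A - C) = (c^2 - a^2 - b^2)/2 := by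
        have e : A - B = (A - C) + (C - B) := by abel
        have h1 : ‖A - B‖^2 = ‖A - C‖^2 + 2 * inner ℝ (A - C) (C - B) + ‖C - B‖^2 := by
          rw [e]; exact norm_add_sq_real _ _
        have hnABc : ‖A - B‖ = c := by rw [← dist_eq_norm]; exact hc.symm
        rw [hnABc, hnAC, hnCB] at h1
        rw [real_inner_comm]
        linarith
      have hSB : dist S B = τ * b := by
        have hsq2 : dist S B ^ 2 = (τ * b)^2 := by
          rw [dist_eq_norm]
          have e : S - B = (C - B) + τ • (A - C) := by rw [hSdef]; abel
          rw [e, norm_add_sq_real, real_inner_smul_right, hinner, norm_smul,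
            Real.norm_eq_abs, abs_of_nonneg hτ0, mul_pow, hnCB, hnAC]
          linear_combination (-1 : ℝ) * hτq
        calc dist S B = Real.sqrt (dist S B ^ 2) := (Real.sqrt_sq dist_nonneg).symm
          _ = Real.sqrt ((τ * b)^2) := by rw [hsq2]
          _ = τ * b := Real.sqrt_sq (by positivity)
      have hsq : (2 * a ^ 2 * (b - c) - (b - 2 * c) * (b + c) ^ 2) / b ≤ (2*(τ*b))^2 := by
        have expand : (2*(τ*b))^2 = 4*a^4*b^2/(a^2+b^2-c^2)^2 := by
          rw [hτdef]; field_simp; ring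
        rw [div_le_iff₀ hbpos, expand, div_mul_eq_mul_div, le_div_iff₀ (by positivity)]
        nlinarith [EvacAux.ineq_two hcpos hbc hab hnonobtuse hreg]
      have hsqrt : Real.sqrt ((2 * a ^ 2 * (b - c) - (b - 2 * c) * (b + c) ^ 2) / b)
          ≤ 2*(τ*b) := by
        refine (Real.sqrt_le_sqrt hsq).trans ?_
        rw [Real.sqrt_sq (by positivity)]
      apply hlow S (Or.inl (Or.inr hSseg))
      · rw [hSB]; linarith
      · rw [hSC]; linarith
  · -- upper bound
    rw [hW]
    apply iSup₂_le
    intro S hS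
    have main : ∀ X Y Z : Plane, S ∈ segment ℝ X Y →
        perimeter A B C = segment ℝ X Y ∪ segment ℝ Y Z ∪ segment ℝ Z X →
        dist X Y + dist Y Z + dist Z X = a + b + c →
        (⨅ (σ : ℝ → Plane) (ρ : ℝ → Plane) (_ : IsEvacProtocol A B C S σ ρ),
          evacCost A B C σ ρ) ≤ ENNReal.ofReal (a + (b + c) / 2) := by
      intro X Y Z hSseg hperim hlen
      obtain ⟨σ, ρ, hσl, hρl, hσ0, hρ0, hσr, hρr, hhits, hσdef, hρdef⟩ :=
        EvacAux.protocol_main X Y Z S hSseg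
      rw [← hσdef, ← hρdef] at hhits
      have hproto : IsEvacProtocol A B C S σ ρ := by
        refine ⟨hσl.lipschitzOnWith, hρl.lipschitzOnWith, hσ0, hρ0, ?_⟩
        intro T hT
        rw [hperim] at hT
        obtain ⟨u, v, hu0, hv0, -, hσu, -⟩ := hhits T hT
        exact Or.inl ⟨u, hu0, hσu⟩
      refine le_trans (iInf_le_of_le σ (iInf_le_of_le ρ
        (iInf_le (fun _ => evacCost A B C σ ρ) hproto))) ?_
      unfold evacCost
      apply iSup₂_le
      intro T hTperim
      apply ENNReal.ofReal_le_ofReal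
      obtain ⟨u, v, hu0, hv0, huv, hσu, hρv⟩ := hhits T (by rw [← hperim]; exact hTperim)
      obtain ⟨ht0, htmem, htmin⟩ := EvacAux.findTime_spec
        hσl.continuous.continuousOn hρl.continuous.continuousOn hu0 (Or.inl hσu)
      have htu : findTime σ ρ T ≤ u := htmin u hu0 (Or.inl hσu)
      have htv : findTime σ ρ T ≤ v := htmin v hv0 (Or.inr hρv)
      have hσperim : ∀ t, σ t ∈ perimeter A B C := fun t => by
        rw [hperim]; exact hσr t
      have hρperim : ∀ t, ρ t ∈ perimeter A B C := fun t => by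
        rw [hperim]; exact hρr t
      unfold evacTime
      by_cases hcase : σ (findTime σ ρ T) = T
      · rw [if_pos hcase]
        have hd1 : dist (ρ (findTime σ ρ T)) T ≤ v - findTime σ ρ T := by
          have h := EvacAux.robot_dist (hρl.lipschitzOnWith (s := Ici 0)) ht0 hv0
          rw [hρv, abs_of_nonpos (by linarith), neg_sub] at h
          exact h
        have hd2 : dist (ρ (findTime σ ρ T)) T ≤ a :=
          hdiam _ _ (hρperim _) hTperim
        rcases le_total v (a + (b + c) / 2) with h | h
        · linarith
        · linarith
      · rw [if_neg hcase]
        have hρcase : ρ (findTime σ ρ T) = T := htmem.resolve_left hcase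
        have hd1 : dist (σ (findTime σ ρ T)) T ≤ u - findTime σ ρ T := by
          have h := EvacAux.robot_dist (hσl.lipschitzOnWith (s := Ici 0)) ht0 hu0
          rw [hσu, abs_of_nonpos (by linarith), neg_sub] at h
          exact h
        have hd2 : dist (σ (findTime σ ρ T)) T ≤ a :=
          hdiam _ _ (hσperim _) hTperim
        rcases le_total u (a + (b + c) / 2) with h | h
        · linarith
        · linarith
    rcases hS with (hS | hS) | hS
    · exact main B C A hS rfl (by rw [← ha, ← hb, ← hc])
    · refine main C A B hS ?_ ?_
      · unfold perimeter; ext x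
        simp only [mem_union]
        tauto
      · rw [← ha, ← hb, ← hc]; ring
    · refine main A B C hS ?_ ?_
      · unfold perimeter; ext x
        simp only [mem_union]
        tauto
      · rw [← ha, ← hb, ← hc]; ring
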